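/- arXiv:2401.12626 — 2 statements merged into one kernel-verified Lean document; each statement's English description precedes it below -/
import Mathlib

section
/- Let f(z) be the k×k symbol of a tridiagonal k-Toeplitz operator with entries a_i on the diagonal, b_i on the superdiagonal, c_i on the subdiagonal, with corner entries c_k z in position (1,k) and b_k z^{-1} in position (k,1). Then for every λ ∈ ℂ and every nonzero z ∈ ℂ, det(f(z) − λI) = (−1)^{k+1}(∏_{i=1}^k c_i) z + (−1)^{k+1}(∏_{i=1}^k b_i) z^{-1} + g(λ), where g(λ) = det(A₀ − λI) − b_k c_k p(λ), A₀ is the k×k tridiagonal matrix with diagonal a_i, superdiagonal b_i, subdiagonal c_i, and p(λ) is the characteristic-type determinant of the interior (k−2)×(k−2) tridiagonal submatrix with diagonal a_2,…,a_{k−1} (with p = 0 for k = 1 and p = 1 for k = 2). -/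
open scoped BigOperators
open Matrix

/-- Tridiagonal matrix `A₀` with diagonal `a`, superdiagonal `b`, subdiagonal `c`. -/
def tridiagA0 {k : ℕ} (a b c : Fin (k+1) → ℂ) : Matrix (Fin (k+1)) (Fin (k+1)) ℂ :=
  Matrix.of fun i j =>
    (if i = j then a i else 0) + (if (j : ℕ) = (i : ℕ) + 1 then b i else 0) +
      (if (i : ℕ) = (j : ℕ) + 1 then c j else 0)

/-- The matrix `A₋₁` with `b_k` in the bottom-left corner. -/
def cornerAm1 {k : ℕ} (b : Fin (k+1) → ℂ) : Matrix (Fin (k+1)) (Fin (k+1)) ℂ :=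
  Matrix.of fun i j => if i = Fin.last k ∧ j = 0 then b (Fin.last k) else 0

/-- The matrix `A₁` with `c_k` in the top-right corner. -/
def cornerA1 {k : ℕ} (c : Fin (k+1) → ℂ) : Matrix (Fin (k+1)) (Fin (k+1)) ℂ :=
  Matrix.of fun i j => if i = 0 ∧ j = Fin.last k then c (Fin.last k) else 0

/-- The symbol `f(z) = A₋₁ z⁻¹ + A₀ + A₁ z` of the tridiagonal `k`-Toeplitz operator. -/
noncomputable def symb {k : ℕ} (a b c : Fin (k+1) → ℂ) (z : ℂ) : Matrix (Fin (k+1)) (Fin (k+1)) ℂ :=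
  z⁻¹ • cornerAm1 b + tridiagA0 a b c + z • cornerA1 c

/-- Interior `(k-2)×(k-2)` tridiagonal submatrix (size `k-1` here since the full size is `k+1`),
with diagonal `a_2 - λ, …, a_{k-1} - λ`. -/
def interiorMat {k : ℕ} (a b c : Fin (k+1) → ℂ) (lam : ℂ) :
    Matrix (Fin (k-1)) (Fin (k-1)) ℂ :=
  Matrix.of fun i j =>
    (if i = j then a ⟨(i : ℕ) + 1, by have h := i.2; omega⟩ - lam else 0) +
      (if (j : ℕ) = (i : ℕ) + 1 then b ⟨(i : ℕ) + 1, by have h := i.2; omega⟩ else 0) +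
      (if (i : ℕ) = (j : ℕ) + 1 then c ⟨(j : ℕ) + 1, by have h := j.2; omega⟩ else 0)

/-- `p(λ)`: `0` for `k = 1` (here `k = 0`), `1` for `k = 2`, and the interior determinant
for larger `k`. -/
def pPoly {k : ℕ} (a b c : Fin (k+1) → ℂ) (lam : ℂ) : ℂ :=
  if k = 0 then 0 else (interiorMat a b c lam).det

/-- `g(λ) = det(A₀ - λ) - b_k c_k p(λ)`. -/
def gPoly {k : ℕ} (a b c : Fin (k+1) → ℂ) (lam : ℂ) : ℂ :=
  (tridiagA0 a b c - lam • 1).det - b (Fin.last k) * c (Fin.last k) * pPoly a b c lam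

section Aux

variable {m : ℕ} (a b c : Fin (m+2) → ℂ) (lam : ℂ)

lemma T_apply (i j : Fin (m+2)) :
    (tridiagA0 a b c - lam • 1) i j =
      (if i = j then a i - lam else 0) + (if (j : ℕ) = (i : ℕ) + 1 then b i else 0) +
        (if (i : ℕ) = (j : ℕ) + 1 then c j else 0) := by
  simp only [Matrix.sub_apply, Matrix.smul_apply, Matrix.one_apply, tridiagA0, Matrix.of_apply,
    smul_eq_mul]
  split_ifs <;> ring

lemma detD1 :
    ((tridiagA0 a b c - lam • 1).updateRow 0 (Pi.single (Fin.last (m+1)) 1)).det =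
      (-1 : ℂ) ^ (m+1) * ∏ p : Fin (m+1), c p.castSucc := by
  set T := tridiagA0 a b c - lam • 1 with hT
  rw [Matrix.det_succ_row_zero]
  rw [Finset.sum_eq_single_of_mem (Fin.last (m+1)) (Finset.mem_univ _)
    (fun j _ hj => by simp [Matrix.updateRow_self, Pi.single_eq_of_ne hj])]
  have hlast : ((Fin.last (m+1) : Fin (m+2)) : ℕ) = m + 1 := rfl
  rw [Matrix.updateRow_self, Pi.single_eq_same, hlast, Fin.succAbove_last]
  have hsub : ∀ p q : Fin (m+1),
      (T.updateRow 0 (Pi.single (Fin.last (m+1)) 1)).submatrix Fin.succ Fin.castSucc p q =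
        T p.succ q.castSucc := by
    intro p q
    simp [Matrix.submatrix_apply, Matrix.updateRow_ne (Fin.succ_ne_zero p)]
  have htri : ((T.updateRow 0 (Pi.single (Fin.last (m+1)) 1)).submatrix Fin.succ
      Fin.castSucc).det = ∏ p : Fin (m+1), c p.castSucc := by
    rw [Matrix.det_of_upperTriangular]
    · refine Finset.prod_congr rfl fun p _ => ?_
      rw [hsub, hT, T_apply]
      rw [if_neg (by simp [Fin.ext_iff]), if_neg (by simp only [Fin.val_succ, Fin.coe_castSucc]; omega), if_pos (by simp only [Fin.val_succ, Fin.coe_castSucc])]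
      ring
    · intro p q hpq
      have hpq' : (q : ℕ) < (p : ℕ) := hpq
      rw [hsub, hT, T_apply]
      rw [if_neg (by simp only [Fin.ext_iff, Fin.val_succ, Fin.coe_castSucc]; omega),
        if_neg (by simp only [Fin.val_succ, Fin.coe_castSucc]; omega),
        if_neg (by simp only [Fin.val_succ, Fin.coe_castSucc]; omega)]
      ring
  rw [htri]; ring

lemma detD2 :
    ((tridiagA0 a b c - lam • 1).updateRow (Fin.last (m+1)) (Pi.single 0 1)).det =
      (-1 : ℂ) ^ (m+1) * ∏ p : Fin (m+1), b p.castSucc := by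
  set T := tridiagA0 a b c - lam • 1 with hT
  rw [Matrix.det_succ_row _ (Fin.last (m+1))]
  rw [Finset.sum_eq_single_of_mem 0 (Finset.mem_univ _)
    (fun j _ hj => by simp [Matrix.updateRow_self, Pi.single_eq_of_ne hj])]
  rw [Matrix.updateRow_self, Pi.single_eq_same, Fin.succAbove_last]
  have h0 : ((0 : Fin (m+2)) : ℕ) = 0 := rfl
  have hlast : ((Fin.last (m+1) : Fin (m+2)) : ℕ) = m + 1 := rfl
  have hsub : ∀ p q : Fin (m+1),
      (T.updateRow (Fin.last (m+1)) (Pi.single 0 1)).submatrix Fin.castSucc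
        ((0 : Fin (m+2)).succAbove) p q = T p.castSucc q.succ := by
    intro p q
    have : p.castSucc ≠ Fin.last (m+1) := by
      simp [Fin.ext_iff]; omega
    simp [Matrix.submatrix_apply, Matrix.updateRow_ne this]
  have htri : ((T.updateRow (Fin.last (m+1)) (Pi.single 0 1)).submatrix Fin.castSucc
      ((0 : Fin (m+2)).succAbove)).det = ∏ p : Fin (m+1), b p.castSucc := by
    rw [Matrix.det_of_lowerTriangular]
    · refine Finset.prod_congr rfl fun p _ => ?_
      rw [hsub, hT, T_apply]
      rw [if_neg (by simp [Fin.ext_iff]), if_pos (by simp only [Fin.val_succ, Fin.coe_castSucc]), if_neg (by simp only [Fin.val_succ, Fin.coe_castSucc]; omega)]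
      ring
    · intro p q hpq
      have hpq' : (p : ℕ) < (q : ℕ) := hpq
      rw [hsub, hT, T_apply]
      rw [if_neg (by simp only [Fin.ext_iff, Fin.val_succ, Fin.coe_castSucc]; omega),
        if_neg (by simp only [Fin.val_succ, Fin.coe_castSucc]; omega),
        if_neg (by simp only [Fin.val_succ, Fin.coe_castSucc]; omega)]
      ring
  rw [htri, hlast, h0]; ring

lemma detD3 :
    (((tridiagA0 a b c - lam • 1).updateRow (Fin.last (m+1)) (Pi.single 0 1)).updateRow 0
        (Pi.single (Fin.last (m+1)) 1)).det = - pPoly a b c lam := by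
  set T := tridiagA0 a b c - lam • 1 with hT
  set U := T.updateRow (Fin.last (m+1)) (Pi.single 0 1) with hU
  rw [Matrix.det_succ_row_zero]
  rw [Finset.sum_eq_single_of_mem (Fin.last (m+1)) (Finset.mem_univ _)
    (fun j _ hj => by simp [Matrix.updateRow_self, Pi.single_eq_of_ne hj])]
  have hlast : ((Fin.last (m+1) : Fin (m+2)) : ℕ) = m + 1 := rfl
  rw [Matrix.updateRow_self, Pi.single_eq_same, hlast, Fin.succAbove_last]
  set S := (U.updateRow (0 : Fin (m+2)) (Pi.single (Fin.last (m+1)) 1)).submatrix Fin.succ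
    Fin.castSucc with hS
  have hSapp : ∀ p q : Fin (m+1), S p q = U p.succ q.castSucc := by
    intro p q
    simp [hS, Matrix.submatrix_apply, Matrix.updateRow_ne (Fin.succ_ne_zero p)]
  have hrow : ∀ q : Fin (m+1), S (Fin.last m) q = (Pi.single (0 : Fin (m+2)) (1:ℂ) : Fin (m+2) → ℂ) q.castSucc := by
    intro q
    rw [hSapp]
    have : (Fin.last m).succ = Fin.last (m+1) := by simp [Fin.ext_iff]
    rw [this, hU, Matrix.updateRow_self]
  have hdetS : S.det = (-1 : ℂ) ^ m * (interiorMat a b c lam).det := by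
    rw [Matrix.det_succ_row _ (Fin.last m)]
    rw [Finset.sum_eq_single_of_mem 0 (Finset.mem_univ _)
      (fun j _ hj => by
        have : (j.castSucc : Fin (m+2)) ≠ 0 := by
          intro h; apply hj; apply Fin.castSucc_injective; exact h.trans rfl
        simp [hrow, Pi.single_eq_of_ne this])]
    have : (((0 : Fin (m+1)).castSucc : Fin (m+2))) = 0 := rfl
    rw [hrow, this, Pi.single_eq_same]
    have hmin : S.submatrix ((Fin.last m).succAbove) ((0 : Fin (m+1)).succAbove) =
        interiorMat a b c lam := by
      ext p q
      obtain ⟨p, hp⟩ := p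
      obtain ⟨q, hq⟩ := q
      rw [Matrix.submatrix_apply, Fin.succAbove_last, Fin.zero_succAbove, hSapp]
      have hne : (((⟨p, hp⟩ : Fin m).castSucc).succ : Fin (m+2)) ≠ Fin.last (m+1) := by
        intro h
        have h2 := congrArg Fin.val h
        simp only [Fin.castSucc_mk, Fin.succ_mk, Fin.val_last] at h2
        omega
      rw [hU, Matrix.updateRow_ne hne, hT, T_apply]
      simp only [interiorMat, Matrix.of_apply, Fin.castSucc_mk, Fin.succ_mk, Fin.mk.injEq,
        add_left_inj]
    rw [hmin]
    simp [Fin.val_last]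
  rw [hdetS]
  have hp : pPoly a b c lam = (interiorMat a b c lam).det := by
    rw [pPoly, if_neg (Nat.succ_ne_zero m)]
  rw [hp]
  calc (-1:ℂ)^(m+1) * 1 * ((-1)^m * (interiorMat a b c lam).det)
      = ((-1:ℂ)^m * (-1)^m) * (-1) * (interiorMat a b c lam).det := by ring
    _ = - (interiorMat a b c lam).det := by rw [← mul_pow]; norm_num

end Aux

/-- determinant expansion of the symbol of a tridiagonal `k`-Toeplitz operator. -/
theorem stmt0 (k : ℕ) (a b c : Fin (k+1) → ℂ) (lam z : ℂ) (hz : z ≠ 0) :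
    (symb a b c z - lam • 1).det =
      (-1 : ℂ) ^ (k + 1 + 1) * (∏ i, c i) * z +
        (-1 : ℂ) ^ (k + 1 + 1) * (∏ i, b i) * z⁻¹ + gPoly a b c lam := by
  rcases k with _ | m
  · rw [gPoly, pPoly, if_pos rfl]
    rw [Matrix.det_fin_one, Matrix.det_fin_one]
    have h0 : (Fin.last 0) = (0 : Fin 1) := rfl
    simp [symb, cornerAm1, cornerA1, tridiagA0, Matrix.one_apply, h0]
    ring
  · set T := tridiagA0 a b c - lam • 1 with hT
    set el := (Pi.single (Fin.last (m+1)) (1:ℂ) : Fin (m+2) → ℂ) with hel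
    set e0 := (Pi.single (0 : Fin (m+2)) (1:ℂ) : Fin (m+2) → ℂ) with he0
    set x := z * c (Fin.last (m+1)) with hx
    set y := z⁻¹ * b (Fin.last (m+1)) with hy
    have h0l : (0 : Fin (m+2)) ≠ Fin.last (m+1) := by simp [Fin.ext_iff]
    have hM : symb a b c z - lam • 1 =
        (T.updateRow 0 (T 0 + x • el)).updateRow (Fin.last (m+1)) (T (Fin.last (m+1)) + y • e0) := by
      ext i j
      have hj2 : (j : ℕ) < m + 2 := j.2
      have hvl : ((Fin.last (m+1)) : ℕ) = m + 1 := rfl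
      have hv0 : ((0 : Fin (m+2)) : ℕ) = 0 := rfl
      rcases eq_or_ne i (Fin.last (m+1)) with rfl | hil
      · rw [Matrix.updateRow_self]
        simp only [symb, cornerAm1, cornerA1, Matrix.sub_apply, Matrix.add_apply,
          Matrix.smul_apply, Matrix.of_apply, Pi.add_apply, Pi.smul_apply, he0, hy,
          Pi.single_apply, hT, tridiagA0, Matrix.one_apply, smul_eq_mul,
          Fin.ext_iff, Fin.val_last, Fin.val_zero, hvl, hv0, true_and, false_and, and_true, and_false, if_true, if_false]
        split_ifs <;> first | ring1 | (exfalso; omega) | exact absurd (‹False ∧ _›).1 not_false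
      rcases eq_or_ne i 0 with rfl | hi0
      · rw [Matrix.updateRow_ne h0l, Matrix.updateRow_self]
        simp only [symb, cornerAm1, cornerA1, Matrix.sub_apply, Matrix.add_apply,
          Matrix.smul_apply, Matrix.of_apply, Pi.add_apply, Pi.smul_apply, hel, hx,
          Pi.single_apply, hT, tridiagA0, Matrix.one_apply, smul_eq_mul,
          Fin.ext_iff, Fin.val_last, Fin.val_zero, hvl, hv0, Nat.zero_ne_add_one, true_and, false_and, and_true, and_false, if_true, if_false]
        split_ifs <;> first | ring1 | (exfalso; omega) | exact absurd (‹False ∧ _›).1 not_false | (simp_all <;> ring1)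
      · have hi0' : (i : ℕ) ≠ 0 := fun h => hi0 (Fin.ext h)
        have hil' : (i : ℕ) ≠ m + 1 := fun h => hil (Fin.ext h)
        rw [Matrix.updateRow_ne hil, Matrix.updateRow_ne hi0]
        simp only [symb, cornerAm1, cornerA1, Matrix.sub_apply, Matrix.add_apply,
          Matrix.smul_apply, Matrix.of_apply, hT, tridiagA0, Matrix.one_apply, smul_eq_mul,
          Fin.ext_iff, Fin.val_last, Fin.val_zero, hvl, hv0, true_and, false_and, and_true, and_false, if_true, if_false]
        split_ifs <;> first | ring1 | (exfalso; omega) | exact absurd (‹False ∧ _›).1 not_false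
    rw [hM, Matrix.det_updateRow_add]
    have e1 : (T.updateRow 0 (T 0 + x • el)) (Fin.last (m+1)) = T (Fin.last (m+1)) :=
      Matrix.updateRow_ne (Ne.symm h0l)
    rw [Matrix.det_updateRow_smul, ← e1, Matrix.updateRow_eq_self,
      Matrix.det_updateRow_add, Matrix.det_updateRow_smul, Matrix.updateRow_eq_self]
    have hcomm : (T.updateRow 0 (T 0 + x • el)).updateRow (Fin.last (m+1)) e0
        = (T.updateRow (Fin.last (m+1)) e0).updateRow 0 (T 0 + x • el) := by
      ext i j
      rcases eq_or_ne i 0 with rfl | hi0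
      · rw [Matrix.updateRow_ne h0l, Matrix.updateRow_self, Matrix.updateRow_self]
      rcases eq_or_ne i (Fin.last (m+1)) with rfl | hil
      · rw [Matrix.updateRow_self, Matrix.updateRow_ne (Ne.symm h0l), Matrix.updateRow_self]
      · rw [Matrix.updateRow_ne hil, Matrix.updateRow_ne hi0, Matrix.updateRow_ne hi0,
          Matrix.updateRow_ne hil]
    rw [hcomm, Matrix.det_updateRow_add, Matrix.det_updateRow_smul]
    have e2 : (T.updateRow (Fin.last (m+1)) e0) 0 = T 0 := Matrix.updateRow_ne h0l
    rw [← e2, Matrix.updateRow_eq_self]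
    rw [hel, he0, hT, detD1, detD2, detD3]
    rw [gPoly]
    have hpc : (∏ i, c i) = (∏ p : Fin (m+1), c p.castSucc) * c (Fin.last (m+1)) :=
      Fin.prod_univ_castSucc c
    have hpb : (∏ i, b i) = (∏ p : Fin (m+1), b p.castSucc) * b (Fin.last (m+1)) :=
      Fin.prod_univ_castSucc b
    have hpow : (-1:ℂ)^(m+1+1+1) = (-1)^(m+1) := by
      rw [pow_succ, pow_succ]; ring
    rw [hpc, hpb, hpow, hx, hy]
    have hzz : z⁻¹ * z = 1 := inv_mul_cancel₀ hz
    field_simp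
    ring
end

section
/- Consider the semi-infinite tridiagonal 2-Toeplitz operator T̃ on complex sequences given by (T̃u)_1 = u_2, (T̃u)_{2m} = u_{2m−1} + u_{2m} + 2u_{2m+1}, (T̃u)_{2m+1} = 2u_{2m} + u_{2m+2} for m ≥ 1. Then the sequence ũ with ũ_{2m+1} = (−1/2)^m and ũ_{2m} = 0 for all m ≥ 0 lies in ℓ² and satisfies T̃ũ = 0; in particular 0 is an eigenvalue of T̃ acting on ℓ². -/
/-- the sequence `ũ` with `ũ_{2m+1} = (-1/2)^m` and `ũ_{2m} = 0` is a nonzero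
square-summable sequence annihilated by the tridiagonal 2-Toeplitz operator `T̃` given by
`(T̃u)_1 = u_2`, `(T̃u)_{2m} = u_{2m-1} + u_{2m} + 2u_{2m+1}`,
`(T̃u)_{2m+1} = 2u_{2m} + u_{2m+2}`; in particular `0` is an eigenvalue of `T̃` on `ℓ²`. -/
theorem stmt4 (u : ℕ → ℂ)
    (hodd : ∀ m : ℕ, u (2 * m + 1) = (-(1 : ℂ) / 2) ^ m)
    (heven : ∀ m : ℕ, u (2 * m) = 0) :
    Summable (fun n : ℕ => ‖u n‖ ^ 2) ∧
      u 1 = 1 ∧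
      u 2 = 0 ∧
      (∀ m : ℕ, 1 ≤ m →
        u (2 * m - 1) + u (2 * m) + 2 * u (2 * m + 1) = 0 ∧
          2 * u (2 * m) + u (2 * m + 2) = 0) := by
  refine ⟨?_, ?_, ?_, ?_⟩
  · have hg : Summable (fun n : ℕ => (2 : ℝ) * (1 / 2) ^ n) :=
      (summable_geometric_of_lt_one (by norm_num) (by norm_num)).mul_left 2
    refine hg.of_nonneg_of_le (fun n => by positivity) (fun n => ?_)
    rcases Nat.even_or_odd n with ⟨m, hm⟩ | ⟨m, hm⟩
    · subst hm
      rw [show m + m = 2 * m by ring, heven]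
      simp
    · subst hm
      rw [hodd]
      have habs : ‖(-(1:ℂ) / 2) ^ m‖ = (1 / 2 : ℝ) ^ m := by
        rw [norm_pow, norm_div, norm_neg]
        norm_num
      rw [habs]
      have : ((1 / 2 : ℝ) ^ m) ^ 2 = 2 * (1 / 2) ^ (2 * m + 1) := by
        rw [pow_succ, ← pow_mul]; ring
      rw [this]
  · have := hodd 0; simpa using this
  · have := heven 1; simpa using this
  · intro m hm
    obtain ⟨k, rfl⟩ := Nat.exists_eq_add_of_le hm
    constructor
    · have h1 : 2 * (1 + k) - 1 = 2 * k + 1 := by omega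
      rw [h1, hodd, heven, hodd, pow_add]
      ring
    · have h2 : 2 * (1 + k) + 2 = 2 * (k + 2) := by ring
      rw [h2, heven, heven]
      ring
end
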